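/- Let G be the subgroup of Aut(Z²) generated by R(α,β) = (α−β, α) and S(α,β) = (−β, −α). Every G-orbit of a nonzero element (α,β) ∈ Z² has cardinality 6 or 12, and it has cardinality exactly 6 if and only if at least one of the following holds: α = 0, β = 0, α = β, α + β = 0, 2α = β, or 2β = α. -/

import Mathlib

private def hexOrb (α β : ℤ) : Finset (ℤ × ℤ) :=
  {(α,β),(α-β,α),(-β,α-β),(-α,-β),(β-α,-α),(β,β-α),
   (-β,-α),(α-β,-β),(α,α-β),(β,α),(β-α,β),(-α,β-α)}

private lemma mem_hexOrb (α β : ℤ) (w : ℤ × ℤ) : w ∈ hexOrb α β ↔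
    w = (α,β) ∨ w = (α-β,α) ∨ w = (-β,α-β) ∨ w = (-α,-β) ∨ w = (β-α,-α) ∨ w = (β,β-α) ∨
    w = (-β,-α) ∨ w = (α-β,-β) ∨ w = (α,α-β) ∨ w = (β,α) ∨ w = (β-α,β) ∨ w = (-α,β-α) := by
  simp [hexOrb]

private lemma stabR (α β : ℤ) (f : ℤ × ℤ → ℤ × ℤ)
    (hf : ∀ a b : ℤ, f (a, b) = (a - b, a)) :
    ∀ w ∈ hexOrb α β, f w ∈ hexOrb α β := by
  intro w hw
  rw [mem_hexOrb] at hw ⊢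
  rcases hw with rfl|rfl|rfl|rfl|rfl|rfl|rfl|rfl|rfl|rfl|rfl|rfl
  · exact Or.inr (Or.inl (by rw [hf, Prod.mk.injEq]; exact ⟨by ring, by ring⟩))
  · exact Or.inr (Or.inr (Or.inl (by rw [hf, Prod.mk.injEq]; exact ⟨by ring, by ring⟩)))
  · exact Or.inr (Or.inr (Or.inr (Or.inl (by rw [hf, Prod.mk.injEq]; exact ⟨by ring, by ring⟩))))
  · exact Or.inr (Or.inr (Or.inr (Or.inr (Or.inl (by rw [hf, Prod.mk.injEq]; exact ⟨by ring, by ring⟩)))))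
  · exact Or.inr (Or.inr (Or.inr (Or.inr (Or.inr (Or.inl (by rw [hf, Prod.mk.injEq]; exact ⟨by ring, by ring⟩))))))
  · exact Or.inl (by rw [hf, Prod.mk.injEq]; exact ⟨by ring, by ring⟩)
  · exact Or.inr (Or.inr (Or.inr (Or.inr (Or.inr (Or.inr (Or.inr (Or.inl (by rw [hf, Prod.mk.injEq]; exact ⟨by ring, by ring⟩))))))))
  · exact Or.inr (Or.inr (Or.inr (Or.inr (Or.inr (Or.inr (Or.inr (Or.inr (Or.inl (by rw [hf, Prod.mk.injEq]; exact ⟨by ring, by ring⟩)))))))))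
  · exact Or.inr (Or.inr (Or.inr (Or.inr (Or.inr (Or.inr (Or.inr (Or.inr (Or.inr (Or.inl (by rw [hf, Prod.mk.injEq]; exact ⟨by ring, by ring⟩))))))))))
  · exact Or.inr (Or.inr (Or.inr (Or.inr (Or.inr (Or.inr (Or.inr (Or.inr (Or.inr (Or.inr (Or.inl (by rw [hf, Prod.mk.injEq]; exact ⟨by ring, by ring⟩)))))))))))
  · exact Or.inr (Or.inr (Or.inr (Or.inr (Or.inr (Or.inr (Or.inr (Or.inr (Or.inr (Or.inr (Or.inr (by rw [hf, Prod.mk.injEq]; exact ⟨by ring, by ring⟩)))))))))))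
  · exact Or.inr (Or.inr (Or.inr (Or.inr (Or.inr (Or.inr (Or.inl (by rw [hf, Prod.mk.injEq]; exact ⟨by ring, by ring⟩)))))))

private lemma stabRi (α β : ℤ) (f : ℤ × ℤ → ℤ × ℤ)
    (hf : ∀ a b : ℤ, f (a, b) = (b, b - a)) :
    ∀ w ∈ hexOrb α β, f w ∈ hexOrb α β := by
  intro w hw
  rw [mem_hexOrb] at hw ⊢
  rcases hw with rfl|rfl|rfl|rfl|rfl|rfl|rfl|rfl|rfl|rfl|rfl|rfl
  · exact Or.inr (Or.inr (Or.inr (Or.inr (Or.inr (Or.inl (by rw [hf, Prod.mk.injEq]; exact ⟨by ring, by ring⟩))))))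
  · exact Or.inl (by rw [hf, Prod.mk.injEq]; exact ⟨by ring, by ring⟩)
  · exact Or.inr (Or.inl (by rw [hf, Prod.mk.injEq]; exact ⟨by ring, by ring⟩))
  · exact Or.inr (Or.inr (Or.inl (by rw [hf, Prod.mk.injEq]; exact ⟨by ring, by ring⟩)))
  · exact Or.inr (Or.inr (Or.inr (Or.inl (by rw [hf, Prod.mk.injEq]; exact ⟨by ring, by ring⟩))))
  · exact Or.inr (Or.inr (Or.inr (Or.inr (Or.inl (by rw [hf, Prod.mk.injEq]; exact ⟨by ring, by ring⟩)))))
  · exact Or.inr (Or.inr (Or.inr (Or.inr (Or.inr (Or.inr (Or.inr (Or.inr (Or.inr (Or.inr (Or.inr (by rw [hf, Prod.mk.injEq]; exact ⟨by ring, by ring⟩)))))))))))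
  · exact Or.inr (Or.inr (Or.inr (Or.inr (Or.inr (Or.inr (Or.inl (by rw [hf, Prod.mk.injEq]; exact ⟨by ring, by ring⟩)))))))
  · exact Or.inr (Or.inr (Or.inr (Or.inr (Or.inr (Or.inr (Or.inr (Or.inl (by rw [hf, Prod.mk.injEq]; exact ⟨by ring, by ring⟩))))))))
  · exact Or.inr (Or.inr (Or.inr (Or.inr (Or.inr (Or.inr (Or.inr (Or.inr (Or.inl (by rw [hf, Prod.mk.injEq]; exact ⟨by ring, by ring⟩)))))))))
  · exact Or.inr (Or.inr (Or.inr (Or.inr (Or.inr (Or.inr (Or.inr (Or.inr (Or.inr (Or.inl (by rw [hf, Prod.mk.injEq]; exact ⟨by ring, by ring⟩))))))))))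
  · exact Or.inr (Or.inr (Or.inr (Or.inr (Or.inr (Or.inr (Or.inr (Or.inr (Or.inr (Or.inr (Or.inl (by rw [hf, Prod.mk.injEq]; exact ⟨by ring, by ring⟩)))))))))))

private lemma stabS (α β : ℤ) (f : ℤ × ℤ → ℤ × ℤ)
    (hf : ∀ a b : ℤ, f (a, b) = (-b, -a)) :
    ∀ w ∈ hexOrb α β, f w ∈ hexOrb α β := by
  intro w hw
  rw [mem_hexOrb] at hw ⊢
  rcases hw with rfl|rfl|rfl|rfl|rfl|rfl|rfl|rfl|rfl|rfl|rfl|rfl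
  · exact Or.inr (Or.inr (Or.inr (Or.inr (Or.inr (Or.inr (Or.inl (by rw [hf, Prod.mk.injEq]; exact ⟨by ring, by ring⟩)))))))
  · exact Or.inr (Or.inr (Or.inr (Or.inr (Or.inr (Or.inr (Or.inr (Or.inr (Or.inr (Or.inr (Or.inr (by rw [hf, Prod.mk.injEq]; exact ⟨by ring, by ring⟩)))))))))))
  · exact Or.inr (Or.inr (Or.inr (Or.inr (Or.inr (Or.inr (Or.inr (Or.inr (Or.inr (Or.inr (Or.inl (by rw [hf, Prod.mk.injEq]; exact ⟨by ring, by ring⟩)))))))))))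
  · exact Or.inr (Or.inr (Or.inr (Or.inr (Or.inr (Or.inr (Or.inr (Or.inr (Or.inr (Or.inl (by rw [hf, Prod.mk.injEq]; exact ⟨by ring, by ring⟩))))))))))
  · exact Or.inr (Or.inr (Or.inr (Or.inr (Or.inr (Or.inr (Or.inr (Or.inr (Or.inl (by rw [hf, Prod.mk.injEq]; exact ⟨by ring, by ring⟩)))))))))
  · exact Or.inr (Or.inr (Or.inr (Or.inr (Or.inr (Or.inr (Or.inr (Or.inl (by rw [hf, Prod.mk.injEq]; exact ⟨by ring, by ring⟩))))))))
  · exact Or.inl (by rw [hf, Prod.mk.injEq]; exact ⟨by ring, by ring⟩)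
  · exact Or.inr (Or.inr (Or.inr (Or.inr (Or.inr (Or.inl (by rw [hf, Prod.mk.injEq]; exact ⟨by ring, by ring⟩))))))
  · exact Or.inr (Or.inr (Or.inr (Or.inr (Or.inl (by rw [hf, Prod.mk.injEq]; exact ⟨by ring, by ring⟩)))))
  · exact Or.inr (Or.inr (Or.inr (Or.inl (by rw [hf, Prod.mk.injEq]; exact ⟨by ring, by ring⟩))))
  · exact Or.inr (Or.inr (Or.inl (by rw [hf, Prod.mk.injEq]; exact ⟨by ring, by ring⟩)))
  · exact Or.inr (Or.inl (by rw [hf, Prod.mk.injEq]; exact ⟨by ring, by ring⟩))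
private lemma card_hexOrb_6 (α β : ℤ) (hv : α ≠ 0 ∨ β ≠ 0)
    (hD : α = 0 ∨ β = 0 ∨ α = β ∨ α + β = 0 ∨ 2*α = β ∨ 2*β = α) :
    (hexOrb α β).card = 6 := by
  have hFeq : hexOrb α β =
      ({(α,β),(α-β,α),(-β,α-β),(-α,-β),(β-α,-α),(β,β-α)} : Finset (ℤ × ℤ)) := by
    apply Finset.Subset.antisymm
    · intro w hw
      rw [mem_hexOrb] at hw
      simp only [Finset.mem_insert, Finset.mem_singleton]
      rcases hw with rfl|rfl|rfl|rfl|rfl|rfl|rfl|rfl|rfl|rfl|rfl|rfl <;>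
        simp only [Prod.mk.injEq] <;> (try simp) <;> omega
    · intro w hw
      simp only [Finset.mem_insert, Finset.mem_singleton] at hw
      rcases hw with rfl|rfl|rfl|rfl|rfl|rfl
      · exact (mem_hexOrb α β _).mpr (Or.inl rfl)
      · exact (mem_hexOrb α β _).mpr (Or.inr (Or.inl rfl))
      · exact (mem_hexOrb α β _).mpr (Or.inr (Or.inr (Or.inl rfl)))
      · exact (mem_hexOrb α β _).mpr (Or.inr (Or.inr (Or.inr (Or.inl rfl))))
      · exact (mem_hexOrb α β _).mpr (Or.inr (Or.inr (Or.inr (Or.inr (Or.inl rfl)))))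
      · exact (mem_hexOrb α β _).mpr (Or.inr (Or.inr (Or.inr (Or.inr (Or.inr (Or.inl rfl))))))
  rw [hFeq,
    Finset.card_insert_of_notMem
      (by simp only [Finset.mem_insert, Finset.mem_singleton, Prod.mk.injEq]; omega),
    Finset.card_insert_of_notMem
      (by simp only [Finset.mem_insert, Finset.mem_singleton, Prod.mk.injEq]; omega),
    Finset.card_insert_of_notMem
      (by simp only [Finset.mem_insert, Finset.mem_singleton, Prod.mk.injEq]; omega),
    Finset.card_insert_of_notMem
      (by simp only [Finset.mem_insert, Finset.mem_singleton, Prod.mk.injEq]; omega),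
    Finset.card_insert_of_notMem
      (by simp only [Finset.mem_singleton, Prod.mk.injEq]; omega),
    Finset.card_singleton]

private lemma card_hexOrb_12 (α β : ℤ) (h1 : α ≠ 0) (h2 : β ≠ 0) (h3 : α ≠ β)
    (h4 : α + β ≠ 0) (h5 : 2*α ≠ β) (h6 : 2*β ≠ α) :
    (hexOrb α β).card = 12 := by
  rw [hexOrb]
  repeat rw [Finset.card_insert_of_notMem
    (by simp only [Finset.mem_insert, Finset.mem_singleton, Prod.mk.injEq]; omega)]
  rw [Finset.card_singleton]

set_option maxHeartbeats 1000000 in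
/-- For the dihedral group `G ≤ Aut(ℤ²)` generated by `R(α,β) = (α-β,α)` and
`S(α,β) = (-β,-α)`, every orbit of a nonzero `v = (α,β) ∈ ℤ²` has cardinality 6 or 12,
and it has cardinality 6 iff `α = 0`, `β = 0`, `α = β`, `α + β = 0`, `2α = β`,
or `2β = α`. -/
theorem stmt_7 (R S : AddAut (ℤ × ℤ))
    (hR : ∀ p : ℤ × ℤ, R p = (p.1 - p.2, p.1))
    (hS : ∀ p : ℤ × ℤ, S p = (-p.2, -p.1))
    (v : ℤ × ℤ) (hv : v ≠ 0) :
    ({y : ℤ × ℤ | ∃ g ∈ AddSubgroup.closure ({R, S} : Set (AddAut (ℤ × ℤ))), g v = y}.ncard = 6 ∨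
      {y : ℤ × ℤ | ∃ g ∈ AddSubgroup.closure ({R, S} : Set (AddAut (ℤ × ℤ))), g v = y}.ncard = 12) ∧
    ({y : ℤ × ℤ | ∃ g ∈ AddSubgroup.closure ({R, S} : Set (AddAut (ℤ × ℤ))), g v = y}.ncard = 6 ↔
      (v.1 = 0 ∨ v.2 = 0 ∨ v.1 = v.2 ∨ v.1 + v.2 = 0 ∨ 2 * v.1 = v.2 ∨ 2 * v.2 = v.1)) := by
  obtain ⟨α, β⟩ := v
  have hv' : α ≠ 0 ∨ β ≠ 0 := by
    by_contra h
    push_neg at h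
    exact hv (by simp [Prod.ext_iff, h.1, h.2])
  have hR2 : ∀ a b : ℤ, R (a, b) = (a - b, a) := fun a b => by rw [hR]
  have hS2 : ∀ a b : ℤ, S (a, b) = (-b, -a) := fun a b => by rw [hS]
  have hR'2 : ∀ a b : ℤ, (-R) (a, b) = (b, b - a) := by
    intro a b
    have h1 : R (b, b - a) = (a, b) := by rw [hR2]; rw [Prod.mk.injEq]; exact ⟨by ring, rfl⟩
    calc (-R) (a, b) = (-R) (R (b, b - a)) := by rw [h1]
    _ = (b, b - a) := by simp
  have hS'2 : ∀ a b : ℤ, (-S) (a, b) = (-b, -a) := by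
    intro a b
    have h1 : S (-b, -a) = (a, b) := by rw [hS2]; rw [Prod.mk.injEq]; exact ⟨by ring, by ring⟩
    calc (-S) (a, b) = (-S) (S (-b, -a)) := by rw [h1]
    _ = (-b, -a) := by simp
  have hRC : R ∈ AddSubgroup.closure ({R, S} : Set (AddAut (ℤ × ℤ))) :=
    AddSubgroup.subset_closure (by simp)
  have hSC : S ∈ AddSubgroup.closure ({R, S} : Set (AddAut (ℤ × ℤ))) :=
    AddSubgroup.subset_closure (by simp)
  have key : {y : ℤ × ℤ | ∃ g ∈ AddSubgroup.closure ({R, S} : Set (AddAut (ℤ × ℤ))),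
      g (α, β) = y} = ↑(hexOrb α β) := by
    ext y
    simp only [Set.mem_setOf_eq, Finset.mem_coe]
    constructor
    · rintro ⟨g, hg, rfl⟩
      have stab : (∀ w ∈ hexOrb α β, g w ∈ hexOrb α β) ∧
          (∀ w ∈ hexOrb α β, (-g) w ∈ hexOrb α β) := by
        induction hg using AddSubgroup.closure_induction with
        | mem x hx =>
          rcases (by simpa using hx : x = R ∨ x = S) with rfl | rfl
          · exact ⟨stabR α β _ hR2, stabRi α β _ hR'2⟩
          · exact ⟨stabS α β _ hS2, stabS α β _ hS'2⟩
        | zero => constructor <;> intro w hw <;> simpa using hw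
        | add x y hx hy ihx ihy =>
          refine ⟨fun w hw => ?_, fun w hw => ?_⟩
          · rw [AddAut.add_apply]
            exact ihx.1 _ (ihy.1 _ hw)
          · rw [neg_add_rev, AddAut.add_apply]
            exact ihy.2 _ (ihx.2 _ hw)
        | neg x hx ihx =>
          refine ⟨ihx.2, fun w hw => ?_⟩
          rw [neg_neg]
          exact ihx.1 _ hw
      exact stab.1 _ ((mem_hexOrb α β _).mpr (Or.inl rfl))
    · intro hy
      rw [mem_hexOrb] at hy
      rcases hy with rfl|rfl|rfl|rfl|rfl|rfl|rfl|rfl|rfl|rfl|rfl|rfl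
      · exact ⟨0, zero_mem _, rfl⟩
      · exact ⟨R, hRC, by rw [hR2]⟩
      · exact ⟨R+R, add_mem hRC hRC,
          by rw [AddAut.add_apply, hR2, hR2, Prod.mk.injEq]; exact ⟨by ring, by ring⟩⟩
      · exact ⟨R+R+R, add_mem (add_mem hRC hRC) hRC,
          by rw [AddAut.add_apply, AddAut.add_apply, hR2, hR2, hR2, Prod.mk.injEq]
             exact ⟨by ring, by ring⟩⟩
      · exact ⟨R+R+R+R, add_mem (add_mem (add_mem hRC hRC) hRC) hRC,
          by rw [AddAut.add_apply, AddAut.add_apply, AddAut.add_apply, hR2, hR2, hR2, hR2,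
               Prod.mk.injEq]
             exact ⟨by ring, by ring⟩⟩
      · exact ⟨R+R+R+R+R, add_mem (add_mem (add_mem (add_mem hRC hRC) hRC) hRC) hRC,
          by rw [AddAut.add_apply, AddAut.add_apply, AddAut.add_apply, AddAut.add_apply, hR2,
               hR2, hR2, hR2, hR2, Prod.mk.injEq]
             exact ⟨by ring, by ring⟩⟩
      · exact ⟨S, hSC, by rw [hS2]⟩
      · exact ⟨R+S, add_mem hRC hSC,
          by rw [AddAut.add_apply, hS2, hR2, Prod.mk.injEq]; exact ⟨by ring, by ring⟩⟩
      · exact ⟨R+R+S, add_mem (add_mem hRC hRC) hSC,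
          by rw [AddAut.add_apply, AddAut.add_apply, hS2, hR2, hR2, Prod.mk.injEq]
             exact ⟨by ring, by ring⟩⟩
      · exact ⟨R+R+R+S, add_mem (add_mem (add_mem hRC hRC) hRC) hSC,
          by rw [AddAut.add_apply, AddAut.add_apply, AddAut.add_apply, hS2, hR2, hR2, hR2,
               Prod.mk.injEq]
             exact ⟨by ring, by ring⟩⟩
      · exact ⟨R+R+R+R+S, add_mem (add_mem (add_mem (add_mem hRC hRC) hRC) hRC) hSC,
          by rw [AddAut.add_apply, AddAut.add_apply, AddAut.add_apply, AddAut.add_apply, hS2,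
               hR2, hR2, hR2, hR2, Prod.mk.injEq]
             exact ⟨by ring, by ring⟩⟩
      · exact ⟨R+R+R+R+R+S,
          add_mem (add_mem (add_mem (add_mem (add_mem hRC hRC) hRC) hRC) hRC) hSC,
          by rw [AddAut.add_apply, AddAut.add_apply, AddAut.add_apply, AddAut.add_apply,
               AddAut.add_apply, hS2, hR2, hR2, hR2, hR2, hR2, Prod.mk.injEq]
             exact ⟨by ring, by ring⟩⟩
  rw [key, Set.ncard_coe_finset]
  by_cases hD : α = 0 ∨ β = 0 ∨ α = β ∨ α + β = 0 ∨ 2*α = β ∨ 2*β = α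
  · exact ⟨Or.inl (card_hexOrb_6 α β hv' hD), fun _ => hD,
      fun _ => card_hexOrb_6 α β hv' hD⟩
  · push_neg at hD
    obtain ⟨h1, h2, h3, h4, h5, h6⟩ := hD
    have h12 := card_hexOrb_12 α β h1 h2 h3 h4 h5 h6
    refine ⟨Or.inr h12, fun h => absurd h (by omega), fun h => ?_⟩
    rcases h with h|h|h|h|h|h <;> simp_all
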